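/- Let B be a finite-dimensional commutative unital ℝ-algebra and let φ : B → ℝ be an ℝ-linear form with φ(1) = 1 such that the symmetric bilinear form Q(a,b) = φ(ab) is positive definite on B. Then B admits an ℝ-basis (e_1, …, e_n) consisting of pairwise orthogonal idempotents whose sum is 1; that is, e_i² = e_i for all i, e_i·e_j = 0 for i ≠ j, and e_1 + ⋯ + e_n = 1. -/

import Mathlib

set_option linter.unnecessarySeqFocus false

/-- A finite-dimensional field extension of `ℝ` is either `ℝ` itself, or contains a
square root of a negative real number. -/
theorem aux_field_surj_or (K : Type*) [Field K] [Algebra ℝ K] [FiniteDimensional ℝ K] :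
    Function.Surjective (algebraMap ℝ K) ∨
      ∃ (w : K) (t : ℝ), w ≠ 0 ∧ 0 < t ∧ w * w = algebraMap ℝ K (-t) := by
  by_cases hs : Function.Surjective (algebraMap ℝ K)
  · exact Or.inl hs
  · right
    rw [Function.Surjective] at hs
    push_neg at hs
    obtain ⟨z, hz⟩ := hs
    haveI : Algebra.IsAlgebraic ℝ K := Algebra.IsAlgebraic.of_finite ℝ K
    let j : K →ₐ[ℝ] ℂ := IsAlgClosed.lift
    have hjinj : Function.Injective j := j.toRingHom.injective
    set a : ℝ := (j z).re with ha
    set b : ℝ := (j z).im with hb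
    have hbne : b ≠ 0 := by
      intro hb0
      apply hz a
      apply hjinj
      rw [AlgHom.commutes]
      apply Complex.ext <;> simp [ha, hb0.symm] <;> exact hb
    refine ⟨z - algebraMap ℝ K a, b ^ 2, ?_, by positivity, ?_⟩
    · intro h0
      have : j z = algebraMap ℝ ℂ a := by
        have := congrArg j (sub_eq_zero.mp h0)
        rwa [AlgHom.commutes] at this
      rw [← AlgHom.commutes j a] at this
      exact hz a (hjinj this).symm
    · apply hjinj
      have hjw : j (z - algebraMap ℝ K a) = Complex.I * b := by
        rw [map_sub, AlgHom.commutes]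
        apply Complex.ext <;> simp [ha, hb, mul_comm]
      rw [map_mul, hjw, AlgHom.commutes]
      apply Complex.ext <;>
        simp [Complex.mul_re, Complex.mul_im, ← Complex.ofReal_pow] <;> ring

open IsArtinianRing in
/-- Let `B` be a finite-dimensional commutative unital ℝ-algebra and
`φ : B → ℝ` a linear form with `φ 1 = 1` such that `Q(a,b) = φ (a*b)` is positive
definite. Then `B` admits an ℝ-basis of pairwise orthogonal idempotents summing to `1`. -/
theorem exists_basis_of_orthogonal_idempotents
    (B : Type*) [CommRing B] [Algebra ℝ B] [FiniteDimensional ℝ B]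
    (φ : B →ₗ[ℝ] ℝ) (hφ1 : φ 1 = 1)
    (hpos : ∀ x : B, x ≠ 0 → 0 < φ (x * x)) :
    ∃ (n : ℕ) (b : Module.Basis (Fin n) ℝ B),
      (∀ i, b i * b i = b i) ∧
      (∀ i j, i ≠ j → b i * b j = 0) ∧
      (∑ i, b i) = 1 := by
  classical
  -- B is reduced
  haveI hred : IsReduced B := by
    rw [isReduced_iff_pow_one_lt 2 one_lt_two]
    intro x hx
    by_contra h
    have := hpos x h
    rw [← sq, hx, map_zero] at this
    exact lt_irrefl 0 this
  haveI hart : IsArtinianRing B := isArtinian_of_tower ℝ inferInstance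
  haveI := (IsArtinianRing.setOfPred_isMaximal_finite B).to_subtype
  set ι := {I : Ideal B | I.IsMaximal} with hι
  haveI : Fintype ι := Fintype.ofFinite ι
  -- upgrade equivPi to an algebra equivalence
  let e : B ≃+* ∀ I : ι, B ⧸ I.1 := (IsArtinianRing.equivPi B).toRingEquiv.trans
    (RingEquiv.piCongrLeft' (fun I : MaximalSpectrum B => B ⧸ I.asIdeal)
      ({ toFun := fun I => ⟨I.asIdeal, I.isMaximal⟩, invFun := fun I => ⟨I.1, I.2⟩,
         left_inv := fun _ => rfl, right_inv := fun _ => rfl } : MaximalSpectrum B ≃ ι))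
  have he : ∀ (x : B) (I : ι), e x I = Ideal.Quotient.mk I.1 x := fun _ _ => rfl
  let ε : B ≃ₐ[ℝ] ∀ I : ι, B ⧸ I.1 :=
    { e with
      commutes' := fun r => rfl }
  -- each residue field is either ℝ or contains a sqrt of a negative real
  have key : ∀ I : ι, Function.Surjective (algebraMap ℝ (B ⧸ I.1)) ∨
      ∃ (w : B ⧸ I.1) (t : ℝ), w ≠ 0 ∧ 0 < t ∧ w * w = algebraMap ℝ (B ⧸ I.1) (-t) := by
    intro I
    haveI hIm : I.1.IsMaximal := I.2
    haveI hfd : FiniteDimensional ℝ (B ⧸ I.1) :=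
      Module.Finite.of_surjective (Ideal.Quotient.mkₐ ℝ I.1).toLinearMap
        Ideal.Quotient.mk_surjective
    letI : Field (B ⧸ I.1) := Ideal.Quotient.field I.1
    exact aux_field_surj_or _
  -- positivity rules out the second alternative
  have surjA : ∀ I : ι, Function.Surjective (algebraMap ℝ (B ⧸ I.1)) := by
    intro I
    rcases key I with hs | ⟨w, t, hw0, ht, hww⟩
    · exact hs
    exfalso
    haveI hIm : I.1.IsMaximal := I.2
    haveI : Nontrivial (B ⧸ I.1) := Ideal.Quotient.nontrivial_iff.mpr hIm.ne_top
    set x : B := ε.symm (Pi.single I w) with hx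
    set f : B := ε.symm (Pi.single I 1) with hf
    have hx0 : x ≠ 0 := by
      intro h0
      have h1 : (Pi.single I w : ∀ I : ι, B ⧸ I.1) = 0 := by
        have := congrArg ε (hx ▸ h0)
        simpa using this
      have := congrFun h1 I
      rw [Pi.single_eq_same] at this
      exact hw0 this
    have hf0 : f ≠ 0 := by
      intro h0
      have h1 : (Pi.single I (1 : B ⧸ I.1) : ∀ I : ι, B ⧸ I.1) = 0 := by
        have := congrArg ε (hf ▸ h0)
        simpa using this
      have := congrFun h1 I
      rw [Pi.single_eq_same] at this
      exact one_ne_zero this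
    have hff : f * f = f := by
      rw [hf, ← map_mul, ← Pi.single_mul, mul_one]
    have hxx : x * x = (-t) • f := by
      rw [hx, hf, ← map_mul, ← map_smul, ← Pi.single_mul, hww,
        Algebra.algebraMap_eq_smul_one, Pi.single_smul]
    have h1 : 0 < φ (x * x) := hpos x hx0
    have h2 : 0 < φ (f * f) := hpos f hf0
    rw [hff] at h2
    rw [hxx, map_smul, smul_eq_mul] at h1
    nlinarith
  -- the idempotents
  let E : ι → B := fun I => ε.symm (Pi.single I 1)
  have hE : ∀ I, ε (E I) = Pi.single I 1 := fun I => ε.apply_symm_apply _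
  have hEne : ∀ I, E I ≠ 0 := by
    intro I h0
    haveI hIm : I.1.IsMaximal := I.2
    haveI : Nontrivial (B ⧸ I.1) := Ideal.Quotient.nontrivial_iff.mpr hIm.ne_top
    have h1 : (Pi.single I (1 : B ⧸ I.1) : ∀ I : ι, B ⧸ I.1) = 0 := by
      rw [← hE I, h0, map_zero]
    have := congrFun h1 I
    rw [Pi.single_eq_same] at this
    exact one_ne_zero this
  have hEmul : ∀ I J, I ≠ J → E I * E J = 0 := by
    intro I J hIJ
    apply ε.injective
    rw [map_mul, hE, hE, map_zero]
    funext K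
    by_cases hK : K = I
    · subst hK
      rw [Pi.mul_apply, Pi.single_eq_of_ne hIJ, mul_zero]
      rfl
    · rw [Pi.mul_apply, Pi.single_eq_of_ne hK, zero_mul]
      rfl
  have hEidem : ∀ I, E I * E I = E I := by
    intro I
    apply ε.injective
    rw [map_mul, hE, ← Pi.single_mul, mul_one]
  have hEsum : ∑ I, E I = 1 := by
    apply ε.injective
    rw [map_sum, map_one]
    funext K
    rw [Finset.sum_apply]
    simp only [hE]
    rw [Finset.sum_pi_single]
    simp
  -- linear independence
  have hli : LinearIndependent ℝ E := by
    rw [linearIndependent_iff']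
    intro s g hs J hJ
    have h2 : E J * (∑ i ∈ s, g i • E i) = g J • (E J * E J) := by
      rw [Finset.mul_sum]
      rw [Finset.sum_eq_single J]
      · rw [mul_smul_comm]
      · intro I hI hIJ
        rw [mul_smul_comm, hEmul J I (Ne.symm hIJ), smul_zero]
      · intro h
        exact absurd hJ h
    rw [hs, mul_zero, hEidem] at h2
    rcases smul_eq_zero.mp h2.symm with h | h
    · exact h
    · exact absurd h (hEne J)
  -- spanning
  have hspan : ⊤ ≤ Submodule.span ℝ (Set.range E) := by
    intro x _
    have hx1 : x = ∑ I, x * E I := by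
      rw [← Finset.mul_sum, hEsum, mul_one]
    rw [hx1]
    apply Submodule.sum_mem
    intro I _
    obtain ⟨r, hr⟩ := surjA I (ε x I)
    have hxE : x * E I = r • E I := by
      apply ε.injective
      rw [map_mul, map_smul, hE]
      funext K
      by_cases hK : K = I
      · subst hK
        rw [Pi.mul_apply, Pi.single_eq_same, mul_one, Pi.smul_apply, Pi.single_eq_same,
          ← hr, Algebra.smul_def, mul_one]
      · rw [Pi.mul_apply, Pi.single_eq_of_ne hK, mul_zero, Pi.smul_apply,
          Pi.single_eq_of_ne hK, smul_zero]
    rw [hxE]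
    exact Submodule.smul_mem _ _ (Submodule.subset_span ⟨I, rfl⟩)
  let b0 : Module.Basis ι ℝ B := Module.Basis.mk hli hspan
  have hb0 : ∀ I, b0 I = E I := fun I => Module.Basis.mk_apply hli hspan I
  refine ⟨Fintype.card ι, b0.reindex (Fintype.equivFin ι), ?_, ?_, ?_⟩
  · intro i
    rw [Module.Basis.reindex_apply, hb0]
    exact hEidem _
  · intro i j hij
    rw [Module.Basis.reindex_apply, Module.Basis.reindex_apply, hb0, hb0]
    apply hEmul
    intro h
    exact hij (by rw [← (Fintype.equivFin ι).apply_symm_apply i, h, Equiv.apply_symm_apply])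
  · rw [← hEsum, ← Equiv.sum_comp (Fintype.equivFin ι).symm E]
    apply Finset.sum_congr rfl
    intro i _
    rw [Module.Basis.reindex_apply, hb0]
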